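/- Consider the Potential Mechanism: given valuations v_i : 2^{M_i} → ℝ≥0, it outputs an allocation ALG maximizing Σ_i v_i(S_i) − P_C(S) over all allocations S, and charges player i the VCG payment p_i = [Σ_j v_j(ALG^{−i}_j) − P_C(ALG^{−i})] − [Σ_{j≠i} v_j(ALG_j) − P_C(ALG)], where ALG^{−i} maximizes the same objective subject to player i receiving ∅. Then p_i ≥ P_C(ALG) − P_C(ALG − ALG_i) for every i, and consequently Σ_i p_i ≥ C(ALG): the mechanism always covers the incurred cost. -/

import Mathlib

open Finset

variable {α : Type*}

noncomputable def potential [DecidableEq α] (n : ℕ)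
    (C : Finset α → ℝ) (S : Fin n → Finset α) : ℝ :=
  ∑ I ∈ (univ : Finset (Fin n)).powerset.filter (· ≠ ∅),
    C (I.biUnion S) / ((I.card : ℝ) * (n.choose I.card : ℝ))

lemma biUnion_update_eq [DecidableEq α] {n : ℕ} (S : Fin n → Finset α) (i : Fin n)
    (I : Finset (Fin n)) :
    I.biUnion (Function.update S i ∅) = (I.erase i).biUnion S := by
  ext x
  simp only [mem_biUnion, mem_erase]
  constructor
  · rintro ⟨j, hj, hx⟩
    rcases eq_or_ne j i with rfl | h
    · rw [Function.update_self] at hx; exact absurd hx (notMem_empty x)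
    · exact ⟨j, ⟨h, hj⟩, by rwa [Function.update_of_ne h] at hx⟩
  · rintro ⟨j, ⟨h, hj⟩, hx⟩
    exact ⟨j, hj, by rwa [Function.update_of_ne h]⟩

lemma potential_eq [DecidableEq α] (n : ℕ) (C : Finset α → ℝ) (hC0 : C ∅ = 0)
    (S : Fin n → Finset α) :
    potential n C S = ∑ I ∈ (univ : Finset (Fin n)).powerset,
      C (I.biUnion S) / ((I.card : ℝ) * (n.choose I.card : ℝ)) := by
  rw [potential]
  apply Finset.sum_subset (filter_subset _ _)
  intro I hI hI2
  have : I = ∅ := by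
    by_contra h
    exact hI2 (mem_filter.2 ⟨hI, h⟩)
  subst this
  simp [hC0]

lemma reindex {n : ℕ} (f : Finset (Fin n) → Fin n → ℝ) :
    ∑ I ∈ (univ : Finset (Fin n)).powerset, ∑ i ∈ I, f (I.erase i) i
    = ∑ J ∈ (univ : Finset (Fin n)).powerset, ∑ i ∈ univ \ J, f J i := by
  rw [Finset.sum_sigma', Finset.sum_sigma']
  apply Finset.sum_bij' (fun x _ => (⟨x.1.erase x.2, x.2⟩ : Σ _ : Finset (Fin n), Fin n))
    (fun x _ => (⟨insert x.2 x.1, x.2⟩ : Σ _ : Finset (Fin n), Fin n))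
  · rintro ⟨I, i⟩ h
    simp only [mem_sigma, mem_powerset, mem_sdiff] at *
    exact ⟨(erase_subset _ _).trans h.1, mem_univ _, notMem_erase _ _⟩
  · rintro ⟨J, i⟩ h
    simp only [mem_sigma, mem_powerset, mem_sdiff] at *
    exact ⟨subset_univ _, mem_insert_self _ _⟩
  · rintro ⟨I, i⟩ h
    simp only [mem_sigma, mem_powerset] at h
    simp [insert_erase h.2]
  · rintro ⟨J, i⟩ h
    simp only [mem_sigma, mem_powerset, mem_sdiff] at h
    simp [erase_insert h.2.2]
  · rintro ⟨I, i⟩ h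
    rfl

lemma choose_identity {n k : ℕ} (h : k < n) :
    ((k : ℝ) + 1) * (n.choose (k + 1) : ℝ) = ((n - k : ℕ) : ℝ) * (n.choose k : ℝ) := by
  have : (k + 1) * n.choose (k + 1) = (n - k) * n.choose k := by
    rw [mul_comm, Nat.choose_succ_right_eq, mul_comm]
  exact_mod_cast this

lemma sum_potential_diff [DecidableEq α] (n : ℕ) (C : Finset α → ℝ) (hC0 : C ∅ = 0)
    (S : Fin n → Finset α) :
    ∑ i, (potential n C S - potential n C (Function.update S i ∅))
      = C ((univ : Finset (Fin n)).biUnion S) := by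
  have key : ∀ i : Fin n, potential n C S - potential n C (Function.update S i ∅)
      = ∑ I ∈ (univ : Finset (Fin n)).powerset,
          ((C (I.biUnion S) - C ((I.erase i).biUnion S))
            / ((I.card : ℝ) * (n.choose I.card : ℝ))) := by
    intro i
    rw [potential_eq n C hC0, potential_eq n C hC0, ← Finset.sum_sub_distrib]
    refine sum_congr rfl fun I _ => ?_
    rw [biUnion_update_eq, sub_div]
  calc ∑ i, (potential n C S - potential n C (Function.update S i ∅))
      = ∑ i : Fin n, ∑ I ∈ (univ : Finset (Fin n)).powerset,
          ((C (I.biUnion S) - C ((I.erase i).biUnion S))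
            / ((I.card : ℝ) * (n.choose I.card : ℝ))) := by
        exact sum_congr rfl fun i _ => key i
    _ = ∑ I ∈ (univ : Finset (Fin n)).powerset, ∑ i : Fin n,
          ((C (I.biUnion S) - C ((I.erase i).biUnion S))
            / ((I.card : ℝ) * (n.choose I.card : ℝ))) := Finset.sum_comm
    _ = ∑ I ∈ (univ : Finset (Fin n)).powerset, ∑ i ∈ I,
          ((C (I.biUnion S) - C ((I.erase i).biUnion S))
            / ((I.card : ℝ) * (n.choose I.card : ℝ))) := by
        refine sum_congr rfl fun I _ => ?_
        symm
        apply Finset.sum_subset (subset_univ I)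
        intro i _ hi
        rw [erase_eq_of_notMem hi, sub_self, zero_div]
    _ = ∑ I ∈ (univ : Finset (Fin n)).powerset,
          ((∑ i ∈ I, C (I.biUnion S) / ((I.card : ℝ) * (n.choose I.card : ℝ)))
          - ∑ i ∈ I, C ((I.erase i).biUnion S) / ((I.card : ℝ) * (n.choose I.card : ℝ))) := by
        refine sum_congr rfl fun I _ => ?_
        rw [← Finset.sum_sub_distrib]
        exact sum_congr rfl fun i _ => sub_div _ _ _
    _ = (∑ I ∈ (univ : Finset (Fin n)).powerset,
          C (I.biUnion S) / (n.choose I.card : ℝ))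
        - ∑ I ∈ (univ : Finset (Fin n)).powerset, ∑ i ∈ I,
          C ((I.erase i).biUnion S) / (((I.erase i).card + 1 : ℕ) : ℝ)
            / ((n.choose ((I.erase i).card + 1) : ℕ) : ℝ) := by
        rw [Finset.sum_sub_distrib]
        congr 1
        · refine sum_congr rfl fun I _ => ?_
          rcases eq_or_ne I ∅ with rfl | hne
          · simp [hC0]
          · have hc : (I.card : ℝ) ≠ 0 :=
              Nat.cast_ne_zero.2 (Finset.card_ne_zero.2 (nonempty_iff_ne_empty.2 hne))
            have hle : I.card ≤ n := by
              have := card_le_card (mem_powerset.1 ‹I ∈ (univ : Finset (Fin n)).powerset›)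
              rwa [card_univ, Fintype.card_fin] at this
            have hch : (n.choose I.card : ℝ) ≠ 0 := by
              exact_mod_cast (Nat.choose_pos hle).ne'
            rw [Finset.sum_const, nsmul_eq_mul]
            field_simp
        · refine sum_congr rfl fun I _ => sum_congr rfl fun i hi => ?_
          rw [Finset.card_erase_add_one hi, ← div_div]
    _ = (∑ I ∈ (univ : Finset (Fin n)).powerset,
          C (I.biUnion S) / (n.choose I.card : ℝ))
        - ∑ J ∈ (univ : Finset (Fin n)).powerset, ((n - J.card : ℕ) : ℝ) *
          (C (J.biUnion S) / ((J.card + 1 : ℕ) : ℝ) / ((n.choose (J.card + 1) : ℕ) : ℝ)) := by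
        congr 1
        rw [reindex (fun J _ => C (J.biUnion S) / ((J.card + 1 : ℕ) : ℝ)
          / ((n.choose (J.card + 1) : ℕ) : ℝ))]
        refine sum_congr rfl fun J hJ => ?_
        rw [Finset.sum_const, nsmul_eq_mul]
        congr 2
        rw [card_sdiff_of_subset (subset_univ J), card_univ, Fintype.card_fin]
    _ = ∑ I ∈ (univ : Finset (Fin n)).powerset,
          (C (I.biUnion S) / (n.choose I.card : ℝ) - ((n - I.card : ℕ) : ℝ) *
          (C (I.biUnion S) / ((I.card + 1 : ℕ) : ℝ) / ((n.choose (I.card + 1) : ℕ) : ℝ))) := by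
        rw [Finset.sum_sub_distrib]
    _ = C ((univ : Finset (Fin n)).biUnion S) := by
        rw [Finset.sum_eq_single_of_mem (univ : Finset (Fin n)) (mem_powerset_self _)]
        · rw [card_univ, Fintype.card_fin, Nat.sub_self, Nat.cast_zero, zero_mul, sub_zero,
            Nat.choose_self, Nat.cast_one, div_one]
        · intro I hI hne
          have hlt : I.card < n := by
            have := Finset.card_lt_card (lt_of_le_of_ne (mem_powerset.1 hI) hne)
            rwa [card_univ, Fintype.card_fin] at this
          have h1 : ((n - I.card : ℕ) : ℝ) ≠ 0 := by
            have : 0 < n - I.card := Nat.sub_pos_of_lt hlt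
            exact_mod_cast this.ne'
          have h2 : (n.choose I.card : ℝ) ≠ 0 := by
            exact_mod_cast (Nat.choose_pos hlt.le).ne'
          have h3 : (n.choose (I.card + 1) : ℝ) ≠ 0 := by
            exact_mod_cast (Nat.choose_pos hlt).ne'
          have h4 : ((I.card : ℕ) : ℝ) + 1 ≠ 0 := by positivity
          have hid := choose_identity hlt
          field_simp
          push_cast
          linear_combination C (I.biUnion S) * hid

theorem stmt10 [DecidableEq α] (n : ℕ) (M : Fin n → Finset α)
    (hM : ∀ i j : Fin n, i ≠ j → Disjoint (M i) (M j))
    (C : Finset α → ℝ) (hC0 : C ∅ = 0) (hCnn : ∀ S, 0 ≤ C S)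
    (hCmono : ∀ S T : Finset α, S ⊆ T → C S ≤ C T)
    (v : Fin n → Finset α → ℝ) (hv0 : ∀ i, v i ∅ = 0)
    (hvmono : ∀ i, ∀ S T : Finset α, S ⊆ T → T ⊆ M i → v i S ≤ v i T)
    (ALG : Fin n → Finset α) (hALGsub : ∀ i, ALG i ⊆ M i)
    (hALGmax : ∀ S : Fin n → Finset α, (∀ i, S i ⊆ M i) →
      ∑ i, v i (S i) - potential n C S ≤ ∑ i, v i (ALG i) - potential n C ALG)
    (A : Fin n → Fin n → Finset α) (hAsub : ∀ i j, A i j ⊆ M j)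
    (hAii : ∀ i, A i i = ∅)
    (hAmax : ∀ i, ∀ S : Fin n → Finset α, (∀ j, S j ⊆ M j) → S i = ∅ →
      ∑ j, v j (S j) - potential n C S ≤ ∑ j, v j (A i j) - potential n C (A i))
    (p : Fin n → ℝ)
    (hp : ∀ i, p i = (∑ j, v j (A i j) - potential n C (A i)) -
      (∑ j ∈ univ.erase i, v j (ALG j) - potential n C ALG)) :
    (∀ i, potential n C ALG - potential n C (Function.update ALG i ∅) ≤ p i) ∧
      C (univ.biUnion ALG) ≤ ∑ i, p i := by
  have part1 : ∀ i, potential n C ALG - potential n C (Function.update ALG i ∅) ≤ p i := by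
    intro i
    set T : Fin n → Finset α := Function.update ALG i ∅ with hT
    have hTsub : ∀ j, T j ⊆ M j := by
      intro j
      by_cases hji : j = i
      · subst hji; rw [hT, Function.update_self]; exact empty_subset _
      · rw [hT, Function.update_of_ne hji]; exact hALGsub j
    have hmax := hAmax i T hTsub (Function.update_self i ∅ ALG)
    have hsum : ∑ j, v j (T j) = ∑ j ∈ univ.erase i, v j (ALG j) := by
      rw [← Finset.add_sum_erase univ (fun j => v j (T j)) (mem_univ i)]
      rw [hT, Function.update_self, hv0 i, zero_add]
      refine sum_congr rfl fun j hj => ?_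
      rw [Function.update_of_ne (mem_erase.1 hj).1]
    rw [hsum] at hmax
    rw [hp i]
    linarith
  refine ⟨part1, ?_⟩
  calc C (univ.biUnion ALG)
      = ∑ i, (potential n C ALG - potential n C (Function.update ALG i ∅)) :=
        (sum_potential_diff n C hC0 ALG).symm
    _ ≤ ∑ i, p i := Finset.sum_le_sum fun i _ => part1 i
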